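/- arXiv:2512.19656 — 3 statements merged into one kernel-verified Lean document; each statement's English description precedes it below -/
import Mathlib

section
/- Let V be a finite-dimensional real topological vector space, let C ⊆ V be a convex cone (not necessarily closed), and let S ⊆ V be a linear subspace such that S has non-empty intersection with the topological interior of C. Then the frontier of C ∩ S computed inside S (with the subspace topology) equals (frontier of C in V) ∩ S. -/
/-- Let `V` be a finite-dimensional real topological vector space,
`C ⊆ V` a convex cone (not necessarily closed), and `S ⊆ V` a linear subspace meeting
the interior of `C`. Then the frontier of `C ∩ S` computed inside `S` (with the subspace
topology) equals `(frontier C) ∩ S`. -/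
theorem frontier_inter_subspace_eq
    {V : Type*} [AddCommGroup V] [Module ℝ V] [TopologicalSpace V]
    [IsTopologicalAddGroup V] [ContinuousSMul ℝ V] [FiniteDimensional ℝ V]
    (C : Set V) (hconv : Convex ℝ C) (hcone : ∀ x ∈ C, ∀ r : ℝ, 0 < r → r • x ∈ C)
    (S : Submodule ℝ V) (hS : ((S : Set V) ∩ interior C).Nonempty) :
    Subtype.val '' frontier ((Subtype.val : S → V) ⁻¹' C) = frontier C ∩ (S : Set V) := by
  obtain ⟨x₀, hx₀S, hx₀⟩ := hS
  ext x
  constructor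
  · rintro ⟨⟨x, hxS⟩, hxf, rfl⟩
    have h := (continuous_subtype_val (p := fun v => v ∈ S)).frontier_preimage_subset C hxf
    exact ⟨h, hxS⟩
  · rintro ⟨hxf, hxS⟩
    refine ⟨⟨x, hxS⟩, ?_, rfl⟩
    have hxcl : x ∈ closure C := hxf.1
    have hxni : x ∉ interior C := hxf.2
    show _ ∈ closure _ \ interior _
    constructor
    · -- closure part: points t•x₀ + (1-t)•x are in interior C for t ∈ (0,1)
      set p : S := ⟨x, hxS⟩
      set q : S := ⟨x₀, hx₀S⟩
      have hcont : Continuous fun t : ℝ => p + t • (q - p) := by fun_prop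
      have htend : Filter.Tendsto (fun t : ℝ => p + t • (q - p)) (nhdsWithin 0 (Set.Ioi 0)) (nhds p) := by
        have : Filter.Tendsto (fun t : ℝ => p + t • (q - p)) (nhds 0) (nhds (p + (0:ℝ) • (q - p))) :=
          hcont.tendsto 0
        simpa using this.mono_left nhdsWithin_le_nhds
      refine mem_closure_of_tendsto htend ?_
      filter_upwards [Ioo_mem_nhdsGT_of_mem (by norm_num : (0:ℝ) ∈ Set.Ico 0 1)] with t ht
      show (p + t • (q - p)).1 ∈ C
      have : (p + t • (q - p) : S).1 = t • x₀ + (1 - t) • x := by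
        simp [p, q]; module
      rw [this]
      exact interior_subset
        (hconv.combo_interior_closure_mem_interior hx₀ hxcl ht.1 (by linarith [ht.2]) (by ring))
    · -- not interior: otherwise x would be interior in V
      intro hint
      apply hxni
      set p : S := ⟨x, hxS⟩
      set q : S := ⟨x₀, hx₀S⟩
      have hcont : Continuous fun t : ℝ => p + t • (p - q) := by fun_prop
      have h0 : (fun t : ℝ => p + t • (p - q)) 0 ∈ interior ((Subtype.val : S → V) ⁻¹' C) := by
        simpa [p] using hint
      have hnhds : (fun t : ℝ => p + t • (p - q)) ⁻¹' interior ((Subtype.val : S → V) ⁻¹' C)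
          ∈ nhds (0:ℝ) :=
        hcont.continuousAt.preimage_mem_nhds (isOpen_interior.mem_nhds h0)
      obtain ⟨ε, hε, hball⟩ := Metric.mem_nhds_iff.1 hnhds
      obtain ⟨t, htpos, htmem⟩ : ∃ t : ℝ, 0 < t ∧ t ∈ Metric.ball (0:ℝ) ε :=
        ⟨ε / 2, by positivity, by
          simp only [Metric.mem_ball, dist_zero_right, Real.norm_eq_abs,
            abs_of_pos (by positivity : (0:ℝ) < ε / 2)]
          linarith⟩
      have hy' : p + t • (p - q) ∈ (Subtype.val ⁻¹' C : Set S) :=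
        interior_subset (hball htmem)
      have hy : (p + t • (p - q) : S).1 ∈ C := hy'
      have hyval : (p + t • (p - q) : S).1 = x + t • (x - x₀) := by simp [p, q]
      rw [hyval] at hy
      have hx_eq : x = (t / (1 + t)) • x₀ + (1 / (1 + t)) • (x + t • (x - x₀)) := by
        have h1 : (1:ℝ) + t ≠ 0 := by positivity
        match_scalars <;> field_simp <;> ring
      rw [hx_eq]
      exact hconv.combo_interior_closure_mem_interior hx₀ (subset_closure hy)
        (by positivity) (by positivity)
        (by field_simp; ring)
end

section
/- Let V be a real vector space with a symmetric bilinear form B. Let E₁, E₁', …, E_r, E_r' ∈ V and let γ ≠ 0 be a real number such that for every i: B(E_i, E_i) = B(E_i', E_i') = −2γ and B(E_i, E_i') = γ, while B(x, y) = 0 whenever x ∈ {E_i, E_i'}, y ∈ {E_j, E_j'} and i ≠ j. Let α ∈ V satisfy B(E_i, α) = B(E_i', α) = B(E₁, α) for all i. Set F_i = E_i + E_i' and E_I = F₁ + ⋯ + F_r, so that B(F_i, F_i) = −2γ ≠ 0 and B(E_I, E_I) = −2rγ ≠ 0. Then (r_{F₁} ∘ ⋯ ∘ r_{F_r})(α)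 = α + (2 B(E₁, α)/γ) · E_I, and this equals r_{E_I}(α), the reflection of α in E_I. -/
open scoped BigOperators

/-- The reflection in a vector `E` with respect to a bilinear form `B`:
`r_E(x) = x − (2 B(E,x)/B(E,E)) • E`. -/
noncomputable def reflectIn {V : Type*} [AddCommGroup V] [Module ℝ V]
    (B : V →ₗ[ℝ] V →ₗ[ℝ] ℝ) (E : V) : V → V :=
  fun x => x - (2 * B E x / B E E) • E

/-- The composition `r_{F₁} ∘ r_{F₂} ∘ ⋯ ∘ r_{F_r}` of the reflections in the vectors
`F 0, …, F (r-1)`. -/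
noncomputable def reflectComp {V : Type*} [AddCommGroup V] [Module ℝ V]
    (B : V →ₗ[ℝ] V →ₗ[ℝ] ℝ) {r : ℕ} (F : Fin r → V) : V → V :=
  (List.ofFn fun i : Fin r => reflectIn B (F i)).foldr (· ∘ ·) id

/-- Let `B` be a symmetric bilinear form on a real vector space `V` and
`E₁, E₁', …, E_r, E_r'` vectors with `B(E_i,E_i) = B(E_i',E_i') = −2γ`, `B(E_i,E_i') = γ`
(`γ ≠ 0`), the pairs for different indices being mutually orthogonal.  If `α` pairs
equally with all `E_i` and `E_i'`, then with `F_i = E_i + E_i'` and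
`E_I = F₁ + ⋯ + F_r`, one has `(r_{F₁} ∘ ⋯ ∘ r_{F_r})(α) = α + (2B(E₁,α)/γ)·E_I`,
and this equals the reflection of `α` in `E_I`. -/
theorem reflectComp_A2_orbit
    {V : Type*} [AddCommGroup V] [Module ℝ V]
    (B : V →ₗ[ℝ] V →ₗ[ℝ] ℝ) (hsymm : ∀ x y, B x y = B y x)
    {r : ℕ} (hr : 0 < r) (E E' : Fin r → V) (γ : ℝ) (hγ : γ ≠ 0)
    (hEE : ∀ i, B (E i) (E i) = -2 * γ)
    (hE'E' : ∀ i, B (E' i) (E' i) = -2 * γ)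
    (hEE' : ∀ i, B (E i) (E' i) = γ)
    (horth₁ : ∀ i j, i ≠ j → B (E i) (E j) = 0)
    (horth₂ : ∀ i j, i ≠ j → B (E i) (E' j) = 0)
    (horth₃ : ∀ i j, i ≠ j → B (E' i) (E' j) = 0)
    (α : V)
    (hα : ∀ i, B (E i) α = B (E ⟨0, hr⟩) α)
    (hα' : ∀ i, B (E' i) α = B (E ⟨0, hr⟩) α) :
    reflectComp B (fun i => E i + E' i) α
        = α + (2 * B (E ⟨0, hr⟩) α / γ) • (∑ i, (E i + E' i)) ∧
    reflectComp B (fun i => E i + E' i) α = reflectIn B (∑ i, (E i + E' i)) α := by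
  set c := B (E ⟨0, hr⟩) α with hc
  set F : Fin r → V := fun i => E i + E' i with hF
  have hFF : ∀ i, B (F i) (F i) = -2 * γ := by
    intro i
    simp only [hF, map_add, LinearMap.add_apply]
    rw [hEE, hE'E', hEE', hsymm (E' i) (E i), hEE']
    ring
  have hForth : ∀ i j, i ≠ j → B (F i) (F j) = 0 := by
    intro i j h
    simp only [hF, map_add, LinearMap.add_apply]
    rw [horth₁ _ _ h, horth₂ _ _ h, horth₃ _ _ h, hsymm (E' i) (E j),
      horth₂ _ _ (Ne.symm h)]
    ring
  have hFα : ∀ i, B (F i) α = 2 * c := by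
    intro i
    simp only [hF, map_add, LinearMap.add_apply]
    rw [hα i, hα' i]
    ring
  have key : ∀ L : List (Fin r), L.Nodup →
      (L.map (fun i => reflectIn B (F i))).foldr (· ∘ ·) id α
        = α + (2 * c / γ) • (L.map F).sum := by
    intro L hL
    induction L with
    | nil => simp
    | cons i L ih =>
      rcases List.nodup_cons.mp hL with ⟨hi, hL'⟩
      simp only [List.map_cons, List.foldr_cons, Function.comp_apply, ih hL', List.sum_cons]
      unfold reflectIn
      have hz : B (F i) ((L.map F).sum) = 0 := by
        rw [map_list_sum]
        apply List.sum_eq_zero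
        intro x hx
        simp only [List.map_map, List.mem_map, Function.comp_apply] at hx
        obtain ⟨j, hj, rfl⟩ := hx
        exact hForth i j (fun h => hi (h ▸ hj))
      rw [map_add, map_smul, smul_eq_mul, hz, hFα, hFF]
      match_scalars
      all_goals field_simp
      all_goals ring
  have hmain : reflectComp B F α = α + (2 * c / γ) • (∑ i, F i) := by
    have h1 : reflectComp B F α
        = ((List.finRange r).map (fun i => reflectIn B (F i))).foldr (· ∘ ·) id α := by
      rw [reflectComp, List.ofFn_eq_map]
    rw [h1, key _ (List.nodup_finRange r), ← List.ofFn_eq_map, List.sum_ofFn]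
  refine ⟨hmain, ?_⟩
  have hEIEI : B (∑ i, F i) (∑ i, F i) = (r : ℝ) * (-2 * γ) := by
    simp only [map_sum, LinearMap.coe_sum, Finset.sum_apply]
    rw [Finset.sum_congr rfl (fun x _ => Finset.sum_eq_single x
      (fun j _ hj => hForth j x hj) (fun h => absurd (Finset.mem_univ x) h))]
    simp [hFF, Finset.sum_const, Finset.card_univ, nsmul_eq_mul]
  have hEIα : B (∑ i, F i) α = (r : ℝ) * (2 * c) := by
    rw [map_sum]
    simp only [LinearMap.coe_sum, Finset.sum_apply]
    rw [Finset.sum_congr rfl (fun i _ => hFα i)]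
    simp [Finset.sum_const, Finset.card_univ]
  rw [hmain, reflectIn, hEIEI, hEIα]
  have hrne : (r : ℝ) ≠ 0 := Nat.cast_ne_zero.mpr hr.ne'
  match_scalars
  · ring
  · field_simp
end

section
/- Let Λ be a free ℤ-module of finite rank with a symmetric bilinear form b : Λ × Λ → ℤ, let V = Λ ⊗_ℤ ℝ and let B be the ℝ-bilinear extension of b. Assume B is nondegenerate, that there exists v ∈ V with B(v, v) > 0, and that every linear subspace of V on which B is positive definite has dimension at most 1 (i.e. B has signature (1, rank Λ − 1)). Let K be a compact subset of {v ∈ V : B(v, v) > 0} and let B₀ > 0 be a real number. Then the set of δ ∈ Λ with −B₀ ≤ b(δ, δ) < 0 for which the hyperplane δ^⊥ = {v ∈ V : B(δ ⊗ 1, v) = 0} meets K is finite. -/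
open scoped TensorProduct



section Aux

variable {V : Type*} [AddCommGroup V] [Module ℝ V]

lemma posdef_pair_absurd (B : V →ₗ[ℝ] V →ₗ[ℝ] ℝ) (hs : ∀ x y, B x y = B y x)
    (hsig : ∀ W : Submodule ℝ V, (∀ x ∈ W, x ≠ 0 → 0 < B x x) → Module.finrank ℝ W ≤ 1)
    {v z : V} (hv : 0 < B v v) (hz : 0 < B z z) (hp : B z v = 0) : False := by
  have hvz : B v z = 0 := by rw [hs]; exact hp
  have hind : LinearIndependent ℝ ![v, z] := by
    rw [LinearIndependent.pair_iff]
    intro s t hst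
    have h1 : B (s • v + t • z) v = 0 := by rw [hst]; simp
    have h2 : B (s • v + t • z) z = 0 := by rw [hst]; simp
    simp only [map_add, map_smul, LinearMap.add_apply, LinearMap.smul_apply,
      smul_eq_mul, hp, hvz, mul_zero, add_zero, zero_add] at h1 h2
    constructor
    · rcases mul_eq_zero.mp h1 with h | h
      · exact h
      · exact absurd h hv.ne'
    · rcases mul_eq_zero.mp h2 with h | h
      · exact h
      · exact absurd h hz.ne'
  set W := Submodule.span ℝ (Set.range ![v, z]) with hW
  have hWpos : ∀ x ∈ W, x ≠ 0 → 0 < B x x := by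
    intro x hx hx0
    obtain ⟨c, hc⟩ := (Submodule.mem_span_range_iff_exists_fun ℝ).mp hx
    rw [Fin.sum_univ_two] at hc
    simp only [Matrix.cons_val_zero, Matrix.cons_val_one, Matrix.head_cons] at hc
    have hBx : B x x = c 0 ^ 2 * B v v + c 1 ^ 2 * B z z := by
      rw [← hc]
      simp only [map_add, map_smul, LinearMap.add_apply, LinearMap.smul_apply, smul_eq_mul,
        hp, hvz, mul_zero, add_zero, zero_add]
      ring
    have hc0 : c 0 ≠ 0 ∨ c 1 ≠ 0 := by
      by_contra hcc
      push_neg at hcc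
      apply hx0
      rw [← hc, hcc.1, hcc.2, zero_smul, zero_smul, add_zero]
    rw [hBx]
    rcases hc0 with h | h
    · have : 0 < c 0 ^ 2 * B v v := by positivity
      nlinarith [sq_nonneg (c 1), hz.le, mul_nonneg (sq_nonneg (c 1)) hz.le]
    · have : 0 < c 1 ^ 2 * B z z := by positivity
      nlinarith [mul_nonneg (sq_nonneg (c 0)) hv.le]
  have h1 := hsig W hWpos
  have h2 : Module.finrank ℝ W = 2 := by
    rw [hW, finrank_span_eq_card hind]
    simp
  omega

lemma B_neg_on_perp (B : V →ₗ[ℝ] V →ₗ[ℝ] ℝ) (hs : ∀ x y, B x y = B y x)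
    (hnd : ∀ v : V, (∀ w, B v w = 0) → v = 0)
    (hsig : ∀ W : Submodule ℝ V, (∀ x ∈ W, x ≠ 0 → 0 < B x x) → Module.finrank ℝ W ≤ 1)
    {v u : V} (hv : 0 < B v v) (hperp : B u v = 0) (hu : u ≠ 0) : B u u < 0 := by
  by_contra hcon
  push_neg at hcon
  rcases lt_or_eq_of_le hcon with hpos | heq
  · exact posdef_pair_absurd B hs hsig hv hpos hperp
  · -- B u u = 0
    have huu : B u u = 0 := heq.symm
    obtain ⟨w, hw⟩ : ∃ w, B u w ≠ 0 := by
      by_contra hcc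
      push_neg at hcc
      exact hu (hnd u hcc)
    have huv' : B v u = 0 := by rw [hs]; exact hperp
    have hwu : B w u = B u w := hs w u
    have hwv : B v w = B w v := hs v w
    set t := B u w with ht
    set M : ℝ := |B w w - (B w v) ^ 2 / B v v| + 1 with hM
    have hM0 : 0 < M := by positivity
    set s : ℝ := t / M with hsdef
    set lam : ℝ := s * B w v / B v v with hlam
    set z := u + s • w - lam • v with hz
    have hzv : B z v = 0 := by
      simp only [hz, map_add, map_sub, map_smul, LinearMap.add_apply, LinearMap.sub_apply,
        LinearMap.smul_apply, smul_eq_mul, hperp]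
      rw [hlam]
      field_simp
      ring
    have hBzz : B z z = 2 * s * t + s ^ 2 * (B w w - (B w v) ^ 2 / B v v) := by
      have expand : B z z = B u u + s * B u w + s * B w u + s ^ 2 * B w w
          - lam * B u v - lam * B v u - s * lam * B w v - s * lam * B v w
          + lam ^ 2 * B v v := by
        simp only [hz, map_add, map_sub, map_smul, LinearMap.add_apply, LinearMap.sub_apply,
          LinearMap.smul_apply, smul_eq_mul]
        ring
      rw [expand, huu, hperp, huv', hwu, hwv, hlam]
      field_simp
      ring
    have hzz : 0 < B z z := by
      rw [hBzz, hsdef]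
      set D : ℝ := B w w - (B w v) ^ 2 / B v v with hD
      have hMne : M ≠ 0 := hM0.ne'
      have heqq : 2 * (t / M) * t + (t / M) ^ 2 * D = t ^ 2 / M ^ 2 * (2 * M + D) := by
        field_simp
      have h2 : 0 < 2 * M + D := by
        rw [hM]
        nlinarith [neg_abs_le D, abs_nonneg D]
      rw [heqq]
      have ht2 : 0 < t ^ 2 := by positivity
      positivity
    exact posdef_pair_absurd B hs hsig hv hzz hzv

end Aux


section Bound

variable {E : Type*} [NormedAddCommGroup E] [NormedSpace ℝ E] [FiniteDimensional ℝ E]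

lemma bilin_continuous (B : E →ₗ[ℝ] E →ₗ[ℝ] ℝ) :
    Continuous fun p : E × E => B p.1 p.2 := by
  let L : E →ₗ[ℝ] (E →L[ℝ] ℝ) :=
    (LinearMap.toContinuousLinearMap : (E →ₗ[ℝ] ℝ) ≃ₗ[ℝ] (E →L[ℝ] ℝ)).toLinearMap ∘ₗ B
  have hL : Continuous L := L.continuous_of_finiteDimensional
  have : Continuous fun p : E × E => (L p.1) p.2 :=
    isBoundedBilinearMap_apply.continuous.comp ((hL.comp continuous_fst).prodMk continuous_snd)
  exact this

lemma bound_lemma (B : E →ₗ[ℝ] E →ₗ[ℝ] ℝ) (K : Set E) (hK : IsCompact K)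
    (hneg : ∀ u v, v ∈ K → u ≠ 0 → B u v = 0 → B u u < 0) (B₀ : ℝ) :
    ∃ R : ℝ, 0 ≤ R ∧ ∀ x : E, -B₀ ≤ B x x → (∃ v ∈ K, B x v = 0) → ‖x‖ ≤ R := by
  have hc : Continuous fun p : E × E => B p.1 p.2 := bilin_continuous B
  set S : Set (E × E) := (Metric.sphere (0 : E) 1 ×ˢ K) ∩ {p | B p.1 p.2 = 0} with hS
  have hScomp : IsCompact S :=
    ((isCompact_sphere 0 1).prod hK).inter_right (isClosed_eq hc continuous_const)
  have hmemS : ∀ p : E × E, p ∈ S ↔ ‖p.1‖ = 1 ∧ p.2 ∈ K ∧ B p.1 p.2 = 0 := by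
    intro p
    simp [hS, Set.mem_inter_iff, mem_sphere_zero_iff_norm, and_assoc]
  rcases S.eq_empty_or_nonempty with hSe | hSne
  · refine ⟨0, le_refl 0, fun x hx ⟨v, hv, hxv⟩ => ?_⟩
    by_contra hx0
    push_neg at hx0
    have hxne : x ≠ 0 := by
      intro h; rw [h, norm_zero] at hx0; exact lt_irrefl 0 hx0
    have : (‖x‖⁻¹ • x, v) ∈ S := by
      rw [hmemS]
      refine ⟨?_, hv, ?_⟩
      · rw [norm_smul, norm_inv, norm_norm, inv_mul_cancel₀ (norm_ne_zero_iff.mpr hxne)]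
      · simp [map_smul, hxv]
    rw [hSe] at this
    exact this
  · obtain ⟨p₀, hp₀, hmax⟩ := hScomp.exists_isMaxOn hSne
      ((hc.comp (continuous_fst.prodMk continuous_fst)).continuousOn)
    set c : ℝ := -(B p₀.1 p₀.1) with hcdef
    have hp₀' := (hmemS p₀).mp hp₀
    have hc0 : 0 < c := by
      rw [hcdef, neg_pos]
      refine hneg p₀.1 p₀.2 hp₀'.2.1 ?_ hp₀'.2.2
      intro h
      rw [h, norm_zero] at hp₀'
      exact one_ne_zero hp₀'.1.symm
    refine ⟨Real.sqrt (B₀ / c), Real.sqrt_nonneg _, fun x hx ⟨v, hv, hxv⟩ => ?_⟩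
    rcases eq_or_ne x 0 with rfl | hx0
    · rw [norm_zero]; exact Real.sqrt_nonneg _
    · set y := ‖x‖⁻¹ • x with hy
      have hxn : ‖x‖ ≠ 0 := norm_ne_zero_iff.mpr hx0
      have hyS : (y, v) ∈ S := by
        rw [hmemS]
        refine ⟨?_, hv, ?_⟩
        · rw [hy, norm_smul, norm_inv, norm_norm, inv_mul_cancel₀ hxn]
        · simp [hy, map_smul, hxv]
      have hyle : B y y ≤ -c := by
        have := hmax hyS
        simpa [hcdef] using this
      have hyy : B y y = ‖x‖⁻¹ ^ 2 * B x x := by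
        simp [hy, map_smul, smul_eq_mul]
        ring
      have hxx : B x x ≤ -c * ‖x‖ ^ 2 := by
        have h1 : ‖x‖⁻¹ ^ 2 * B x x ≤ -c := hyy ▸ hyle
        have h2 : 0 < ‖x‖ ^ 2 := by positivity
        calc B x x = (‖x‖⁻¹ ^ 2 * B x x) * ‖x‖ ^ 2 := by field_simp
        _ ≤ -c * ‖x‖ ^ 2 := mul_le_mul_of_nonneg_right h1 h2.le
      have hsq : ‖x‖ ^ 2 ≤ B₀ / c := by
        rw [le_div_iff₀ hc0]
        nlinarith
      calc ‖x‖ = Real.sqrt (‖x‖ ^ 2) := by rw [Real.sqrt_sq (norm_nonneg x)]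
      _ ≤ Real.sqrt (B₀ / c) := Real.sqrt_le_sqrt hsq

end Bound

/-- Let `Λ` be a free `ℤ`-module of finite rank with a symmetric
bilinear form `b`, let `V = ℝ ⊗_ℤ Λ` (with its canonical Hausdorff vector-space topology)
and let `B` be the `ℝ`-bilinear extension of `b`.  Assume `B` is nondegenerate, that
`B(v,v) > 0` for some `v`, and that every subspace on which `B` is positive definite has
dimension at most `1` (signature `(1, rk Λ − 1)`).  Let `K` be a compact subset of
`{v : B(v,v) > 0}` and `B₀ > 0`.  Then the set of `δ ∈ Λ` with `−B₀ ≤ b(δ,δ) < 0` whose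
wall `δ^⊥` meets `K` is finite. -/
theorem walls_meeting_compact_finite
    {Λ : Type*} [AddCommGroup Λ] [Module.Free ℤ Λ] [Module.Finite ℤ Λ]
    [TopologicalSpace (ℝ ⊗[ℤ] Λ)] [IsTopologicalAddGroup (ℝ ⊗[ℤ] Λ)]
    [ContinuousSMul ℝ (ℝ ⊗[ℤ] Λ)] [T2Space (ℝ ⊗[ℤ] Λ)]
    (b : Λ →ₗ[ℤ] Λ →ₗ[ℤ] ℤ) (hsymm : ∀ x y, b x y = b y x)
    (hnd : ∀ v : ℝ ⊗[ℤ] Λ, (∀ w, LinearMap.BilinForm.baseChange ℝ b v w = 0) → v = 0)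
    (hpos : ∃ v : ℝ ⊗[ℤ] Λ, 0 < LinearMap.BilinForm.baseChange ℝ b v v)
    (hsig : ∀ W : Submodule ℝ (ℝ ⊗[ℤ] Λ),
      (∀ x ∈ W, x ≠ 0 → 0 < LinearMap.BilinForm.baseChange ℝ b x x) →
      Module.finrank ℝ W ≤ 1)
    (K : Set (ℝ ⊗[ℤ] Λ)) (hK : IsCompact K)
    (hKpos : K ⊆ {v | 0 < LinearMap.BilinForm.baseChange ℝ b v v})
    (B₀ : ℝ) (hB₀ : 0 < B₀) :
    {δ : Λ | -B₀ ≤ (b δ δ : ℝ) ∧ b δ δ < 0 ∧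
      ∃ v ∈ K, LinearMap.BilinForm.baseChange ℝ b ((1 : ℝ) ⊗ₜ[ℤ] δ) v = 0}.Finite := by
  classical
  set B : (ℝ ⊗[ℤ] Λ) →ₗ[ℝ] (ℝ ⊗[ℤ] Λ) →ₗ[ℝ] ℝ := LinearMap.BilinForm.baseChange ℝ b with hB
  have hBsymm : ∀ x y : ℝ ⊗[ℤ] Λ, B x y = B y x := by
    have hb : LinearMap.BilinForm.IsSymm b := ⟨fun x y => (hsymm x y).symm ▸ rfl⟩
    have := LinearMap.BilinForm.IsSymm.baseChange (A := ℝ) (LinearMap.BilinForm.isSymm_iff.mp hb)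
    intro x y
    exact this.eq x y
  haveI : FiniteDimensional ℝ (ℝ ⊗[ℤ] Λ) := Module.Finite.base_change ℤ ℝ Λ
  set ι := Module.Free.ChooseBasisIndex ℤ Λ
  set bΛ : Module.Basis ι ℤ Λ := Module.Free.chooseBasis ℤ Λ with hbΛ
  set cB : Module.Basis ι ℝ (ℝ ⊗[ℤ] Λ) := bΛ.baseChange ℝ with hcB
  set e : (ℝ ⊗[ℤ] Λ) ≃ₗ[ℝ] (ι → ℝ) := cB.equivFun with he
  have hecont : Continuous e := e.toLinearMap.continuous_of_finiteDimensional
  set B' : (ι → ℝ) →ₗ[ℝ] (ι → ℝ) →ₗ[ℝ] ℝ :=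
    B.compl₁₂ e.symm.toLinearMap e.symm.toLinearMap with hB'
  have hB'apply : ∀ x y, B' x y = B (e.symm x) (e.symm y) := fun x y => rfl
  have hneg' : ∀ u v, v ∈ e '' K → u ≠ 0 → B' u v = 0 → B' u u < 0 := by
    rintro u v ⟨v₀, hv₀, rfl⟩ hu h0
    rw [hB'apply]
    refine B_neg_on_perp B hBsymm hnd hsig (v := v₀) ?_ ?_ ?_
    · exact hKpos hv₀
    · rw [hB'apply, LinearEquiv.symm_apply_apply] at h0
      exact h0
    · intro h
      apply hu
      have : e.symm u = e.symm 0 := by rw [h, map_zero]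
      exact e.symm.injective (by rw [h, map_zero])
  obtain ⟨R, hR0, hR⟩ := bound_lemma B' (e '' K) (hK.image hecont) hneg' B₀
  set M : ℤ := ⌈R⌉ with hM
  set g : Λ → (ι → ℤ) := fun δ i => bΛ.repr δ i with hg
  have hginj : Function.Injective g := by
    intro a a' h
    apply bΛ.repr.injective
    ext i
    exact congrFun h i
  set T : Set (ι → ℤ) := Set.pi Set.univ (fun _ => (Finset.Icc (-M) M : Set ℤ)) with hT
  have hTfin : T.Finite := Set.Finite.pi (fun _ => (Finset.Icc (-M) M).finite_toSet)
  refine Set.Finite.subset (Set.Finite.preimage (Set.injOn_of_injective hginj) hTfin) ?_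
  rintro δ ⟨h1, h2, v, hv, h3⟩
  -- bound the norm of e (1 ⊗ δ)
  set x : ι → ℝ := e ((1 : ℝ) ⊗ₜ[ℤ] δ) with hx
  have hxx : B' x x = (b δ δ : ℝ) := by
    rw [hB'apply, hx, LinearEquiv.symm_apply_apply]
    rw [hB]
    rw [LinearMap.BilinForm.baseChange_tmul]
    simp [zsmul_eq_mul]
  have hxv : B' x (e v) = 0 := by
    rw [hB'apply, hx, LinearEquiv.symm_apply_apply, LinearEquiv.symm_apply_apply]
    exact h3
  have hnorm : ‖x‖ ≤ R := by
    refine hR x ?_ ⟨e v, Set.mem_image_of_mem e hv, hxv⟩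
    rw [hxx]
    exact h1
  intro i _
  have hxi : x i = ((bΛ.repr δ i : ℤ) : ℝ) := by
    rw [hx, he, Module.Basis.equivFun_apply, hcB, Module.Basis.baseChange_repr_tmul]
    simp [zsmul_eq_mul]
  have habs : |((bΛ.repr δ i : ℤ) : ℝ)| ≤ R := by
    rw [← hxi]
    calc |x i| = ‖x i‖ := rfl
    _ ≤ ‖x‖ := norm_le_pi_norm x i
    _ ≤ R := hnorm
  have hceil : |(bΛ.repr δ i : ℤ)| ≤ M := by
    have : ((|bΛ.repr δ i| : ℤ) : ℝ) ≤ (M : ℝ) := by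
      rw [Int.cast_abs]
      exact le_trans habs (Int.le_ceil R)
    exact_mod_cast this
  simp only [Finset.coe_Icc, Set.mem_Icc]
  exact abs_le.mp hceil
end
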